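/- Let F(t) = 1/(1+e^{-t}) denote the logistic function. Fix n, d, m ∈ ℕ, labeled data x_1,…,x_n ∈ ℝ^d with responses y_1,…,y_n ∈ ℝ, a similarity threshold s > 0, guidance pairs given by vectors u_1, v_1, …, u_m, v_m ∈ ℝ^d, and regularization parameters λ₁ ≥ 0, λ₂ ≥ 0. Then the Similar-guidance objective J(w) = Σ_{i=1}^n (⟨x_i, w⟩ − y_i)² + λ₁‖w‖² − λ₂ Σ_{t=1}^m log( F(s − (⟨u_t, w⟩ − ⟨v_t, w⟩)) − F(−s − (⟨u_t, w⟩ − ⟨v_t, w⟩)) ) is a convex function of w on ℝ^d. -/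

import Mathlib

open Real

private lemma logexp_convex (c : ℝ) (hc : 0 < c) :
    ConvexOn ℝ Set.univ (fun t : ℝ => Real.log (c + Real.exp t)) := by
  have hpos : ∀ t : ℝ, 0 < c + Real.exp t := fun t => by positivity
  have hd1 : ∀ t : ℝ, HasDerivAt (fun t : ℝ => Real.log (c + Real.exp t))
      (Real.exp t / (c + Real.exp t)) t := by
    intro t
    have h := ((Real.hasDerivAt_exp t).const_add c).log (hpos t).ne'
    simpa using h
  have hderiv : deriv (fun t : ℝ => Real.log (c + Real.exp t))
      = fun t => Real.exp t / (c + Real.exp t) := by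
    funext t; exact (hd1 t).deriv
  have hd2 : ∀ t : ℝ, HasDerivAt (fun t => Real.exp t / (c + Real.exp t))
      ((Real.exp t * (c + Real.exp t) - Real.exp t * Real.exp t) / (c + Real.exp t) ^ 2) t := by
    intro t
    exact (Real.hasDerivAt_exp t).div ((Real.hasDerivAt_exp t).const_add c) (hpos t).ne'
  apply convexOn_of_deriv2_nonneg convex_univ
  · exact Continuous.continuousOn (by fun_prop (disch := intro t; positivity))
  · intro t _; exact ((hd1 t).differentiableAt).differentiableWithinAt
  · intro t _
    rw [interior_univ]
    have : DifferentiableAt ℝ (deriv (fun t : ℝ => Real.log (c + Real.exp t))) t := by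
      rw [hderiv]; exact (hd2 t).differentiableAt
    exact this.differentiableWithinAt
  · intro t _
    have h2 : deriv (deriv (fun t : ℝ => Real.log (c + Real.exp t))) t
        = (Real.exp t * (c + Real.exp t) - Real.exp t * Real.exp t) / (c + Real.exp t) ^ 2 := by
      rw [hderiv]; exact (hd2 t).deriv
    have h3 : Real.exp t * (c + Real.exp t) - Real.exp t * Real.exp t = c * Real.exp t := by ring
    show 0 ≤ deriv^[2] (fun t : ℝ => Real.log (c + Real.exp t)) t
    simp only [Function.iterate_succ, Function.iterate_zero, Function.comp_apply, id_eq]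
    rw [h2, h3]
    positivity

private lemma convexOn_neglog_diff (s : ℝ) (hs : 0 < s) :
    ConvexOn ℝ Set.univ (fun δ : ℝ =>
      - Real.log (1 / (1 + Real.exp (-(s - δ))) - 1 / (1 + Real.exp (-(-s - δ))))) := by
  set b := Real.exp s with hbdef
  have hb0 : 0 < b := Real.exp_pos s
  have hb1 : 1 < b := by
    rw [hbdef, ← Real.exp_zero]; exact Real.exp_lt_exp.2 hs
  have hkey : ∀ δ : ℝ, 1 / (1 + Real.exp (-(s - δ))) - 1 / (1 + Real.exp (-(-s - δ)))
      = Real.exp δ * (b ^ 2 - 1) / ((b + Real.exp δ) * (1 + b * Real.exp δ)) := by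
    intro δ
    have h1 : Real.exp (-(s - δ)) = Real.exp δ / b := by
      rw [hbdef, ← Real.exp_sub]; ring_nf
    have h2 : Real.exp (-(-s - δ)) = b * Real.exp δ := by
      rw [hbdef, ← Real.exp_add]; ring_nf
    rw [h1, h2]
    have e0 : (0:ℝ) < Real.exp δ := Real.exp_pos δ
    have d1 : (0:ℝ) < 1 + Real.exp δ / b := by positivity
    have d2 : (0:ℝ) < 1 + b * Real.exp δ := by positivity
    have d3 : (0:ℝ) < b + Real.exp δ := by positivity
    field_simp
    ring
  have hlog : ∀ δ : ℝ,
      - Real.log (1 / (1 + Real.exp (-(s - δ))) - 1 / (1 + Real.exp (-(-s - δ))))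
      = (-δ - Real.log (b ^ 2 - 1)) + Real.log (b + Real.exp δ)
        + (s + Real.log (Real.exp (-s) + Real.exp δ)) := by
    intro δ
    rw [hkey δ]
    have e0 : (0:ℝ) < Real.exp δ := Real.exp_pos δ
    have hsq : (0:ℝ) < b ^ 2 - 1 := by nlinarith
    have hd1 : (0:ℝ) < b + Real.exp δ := by positivity
    have hd2 : (0:ℝ) < 1 + b * Real.exp δ := by positivity
    have h3 : 1 + b * Real.exp δ = b * (Real.exp (-s) + Real.exp δ) := by
      have hb1' : b * Real.exp (-s) = 1 := by
        rw [hbdef, ← Real.exp_add]; norm_num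
      rw [mul_add, hb1']
    have hes : (0:ℝ) < Real.exp (-s) + Real.exp δ := by positivity
    rw [Real.log_div (by positivity) (by positivity), Real.log_mul e0.ne' hsq.ne',
        Real.log_mul hd1.ne' hd2.ne', Real.log_exp, h3,
        Real.log_mul hb0.ne' hes.ne', hbdef, Real.log_exp]
    ring
  have heq : (fun δ : ℝ =>
      - Real.log (1 / (1 + Real.exp (-(s - δ))) - 1 / (1 + Real.exp (-(-s - δ)))))
      = fun δ : ℝ => (-δ - Real.log (b ^ 2 - 1)) + Real.log (b + Real.exp δ)
        + (s + Real.log (Real.exp (-s) + Real.exp δ)) := funext hlog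
  rw [heq]
  have c1 : ConvexOn ℝ Set.univ (fun δ : ℝ => -δ - Real.log (b ^ 2 - 1)) := by
    refine ⟨convex_univ, ?_⟩
    intro p _ q _ a c ha hc hab
    simp only [smul_eq_mul]
    apply le_of_eq
    linear_combination (Real.log (b ^ 2 - 1)) * hab
  have c2 : ConvexOn ℝ Set.univ (fun δ : ℝ => Real.log (b + Real.exp δ)) :=
    logexp_convex b hb0
  have c3 : ConvexOn ℝ Set.univ
      (fun δ : ℝ => s + Real.log (Real.exp (-s) + Real.exp δ)) :=
    (convexOn_const s convex_univ).add (logexp_convex _ (Real.exp_pos _))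
  exact (c1.add c2).add c3

private lemma convexOn_finset_sum {ι E : Type*} [AddCommGroup E] [Module ℝ E]
    (t : Finset ι) (f : ι → E → ℝ) (h : ∀ i ∈ t, ConvexOn ℝ Set.univ (f i)) :
    ConvexOn ℝ Set.univ (fun w => ∑ i ∈ t, f i w) := by
  classical
  induction t using Finset.induction with
  | empty => simpa using convexOn_const (0:ℝ) convex_univ
  | insert a tt hnot ih =>
    simp only [Finset.sum_insert hnot]
    exact (h a (Finset.mem_insert_self _ _)).add
      (ih fun i hi => h i (Finset.mem_insert_of_mem hi))

/-- convexity of the Similar-guidance objective. -/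
theorem similar_guidance_objective_convex
    (n d m : ℕ)
    (x : Fin n → EuclideanSpace ℝ (Fin d)) (y : Fin n → ℝ)
    (u v : Fin m → EuclideanSpace ℝ (Fin d))
    (s : ℝ) (hs : 0 < s)
    (lam1 lam2 : ℝ) (hlam1 : 0 ≤ lam1) (hlam2 : 0 ≤ lam2)
    (F : ℝ → ℝ) (hF : ∀ t, F t = 1 / (1 + Real.exp (-t))) :
    ConvexOn ℝ Set.univ (fun w : EuclideanSpace ℝ (Fin d) =>
      (∑ i, ((inner ℝ (x i) w : ℝ) - y i) ^ 2) + lam1 * ‖w‖ ^ 2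
        - lam2 * ∑ t, Real.log
            (F (s - ((inner ℝ (u t) w : ℝ) - (inner ℝ (v t) w : ℝ)))
              - F (-s - ((inner ℝ (u t) w : ℝ) - (inner ℝ (v t) w : ℝ))))) := by
  -- rewrite the objective
  have hre : (fun w : EuclideanSpace ℝ (Fin d) =>
      (∑ i, ((inner ℝ (x i) w : ℝ) - y i) ^ 2) + lam1 * ‖w‖ ^ 2
        - lam2 * ∑ t, Real.log
            (F (s - ((inner ℝ (u t) w : ℝ) - (inner ℝ (v t) w : ℝ)))
              - F (-s - ((inner ℝ (u t) w : ℝ) - (inner ℝ (v t) w : ℝ)))))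
      = fun w : EuclideanSpace ℝ (Fin d) =>
      ((∑ i, ((inner ℝ (x i) w : ℝ) - y i) ^ 2) + lam1 * ‖w‖ ^ 2)
        + ∑ t, lam2 * (- Real.log
            (1 / (1 + Real.exp (-(s - ((inner ℝ (u t) w : ℝ) - (inner ℝ (v t) w : ℝ)))))
              - 1 / (1 + Real.exp (-(-s - ((inner ℝ (u t) w : ℝ) - (inner ℝ (v t) w : ℝ))))))) := by
    funext w
    simp only [hF, mul_neg, ← Finset.mul_sum, Finset.sum_neg_distrib]
    ring
  rw [hre]
  have hterm1 : ConvexOn ℝ Set.univ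
      (fun w : EuclideanSpace ℝ (Fin d) => ∑ i, ((inner ℝ (x i) w : ℝ) - y i) ^ 2) := by
    apply convexOn_finset_sum
    intro i _
    have hsq : ConvexOn ℝ Set.univ (fun r : ℝ => r ^ 2) := Even.convexOn_pow even_two
    have haff : ConvexOn ℝ Set.univ
        (fun w : EuclideanSpace ℝ (Fin d) => ((innerSL ℝ (x i)).toLinearMap.toAffineMap
          - AffineMap.const ℝ (EuclideanSpace ℝ (Fin d)) (y i)) w ^ 2) := by
      have := hsq.comp_affineMap
        ((innerSL ℝ (x i)).toLinearMap.toAffineMap - AffineMap.const ℝ (EuclideanSpace ℝ (Fin d)) (y i))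
      simpa [Function.comp_def, Pi.sub_apply] using this
    have hfun : (fun w : EuclideanSpace ℝ (Fin d) => ((inner ℝ (x i) w : ℝ) - y i) ^ 2)
        = fun w : EuclideanSpace ℝ (Fin d) => ((innerSL ℝ (x i)).toLinearMap.toAffineMap
          - AffineMap.const ℝ (EuclideanSpace ℝ (Fin d)) (y i)) w ^ 2 := by
      funext w
      simp [AffineMap.coe_sub, Pi.sub_apply]
    rw [hfun]
    exact haff
  have hterm2 : ConvexOn ℝ Set.univ (fun w : EuclideanSpace ℝ (Fin d) => lam1 * ‖w‖ ^ 2) := by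
    have hn : ConvexOn ℝ Set.univ (fun w : EuclideanSpace ℝ (Fin d) => ‖w‖ ^ 2) := by
      refine ⟨convex_univ, ?_⟩
      intro p _ q _ a b ha hb hab
      simp only [smul_eq_mul]
      have h1 : ‖a • p + b • q‖ ≤ a * ‖p‖ + b * ‖q‖ := by
        refine (norm_add_le _ _).trans ?_
        rw [norm_smul, norm_smul, Real.norm_eq_abs, Real.norm_eq_abs,
          abs_of_nonneg ha, abs_of_nonneg hb]
      have h0 : (0:ℝ) ≤ ‖a • p + b • q‖ := norm_nonneg _
      nlinarith [sq_nonneg (‖p‖ - ‖q‖), mul_nonneg ha hb, norm_nonneg p, norm_nonneg q]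
    have := hn.smul hlam1
    simpa [smul_eq_mul] using this
  have hterm3 : ConvexOn ℝ Set.univ
      (fun w : EuclideanSpace ℝ (Fin d) => ∑ t, lam2 * (- Real.log
            (1 / (1 + Real.exp (-(s - ((inner ℝ (u t) w : ℝ) - (inner ℝ (v t) w : ℝ)))))
              - 1 / (1 + Real.exp (-(-s - ((inner ℝ (u t) w : ℝ) - (inner ℝ (v t) w : ℝ)))))))) := by
    apply convexOn_finset_sum
    intro t _
    have hbase := convexOn_neglog_diff s hs
    have hcomp := hbase.comp_affineMap
      (((innerSL ℝ (u t)).toLinearMap - (innerSL ℝ (v t)).toLinearMap).toAffineMap)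
    have hc : ConvexOn ℝ Set.univ
        (fun w : EuclideanSpace ℝ (Fin d) => - Real.log
            (1 / (1 + Real.exp (-(s - ((inner ℝ (u t) w : ℝ) - (inner ℝ (v t) w : ℝ)))))
              - 1 / (1 + Real.exp (-(-s - ((inner ℝ (u t) w : ℝ) - (inner ℝ (v t) w : ℝ))))))) := by
      rw [Set.preimage_univ] at hcomp
      have hfun : (fun w : EuclideanSpace ℝ (Fin d) => - Real.log
            (1 / (1 + Real.exp (-(s - ((inner ℝ (u t) w : ℝ) - (inner ℝ (v t) w : ℝ)))))
              - 1 / (1 + Real.exp (-(-s - ((inner ℝ (u t) w : ℝ) - (inner ℝ (v t) w : ℝ)))))))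
          = (fun δ : ℝ =>
              - Real.log (1 / (1 + Real.exp (-(s - δ))) - 1 / (1 + Real.exp (-(-s - δ)))))
            ∘ (((innerSL ℝ (u t)).toLinearMap - (innerSL ℝ (v t)).toLinearMap).toAffineMap) := by
        funext w
        simp [Function.comp, LinearMap.sub_apply]
      rw [hfun]
      exact hcomp
    have := hc.smul hlam2
    simpa [smul_eq_mul] using this
  exact (hterm1.add hterm2).add hterm3
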